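/- There exists a Zariski-open dense subset U₃ of the complex determinantal variety M_ℂ = {X ∈ ℂ^{m×n} : rank X ≤ r} such that for every X = [x_1 ⋯ x_n] ∈ U₃, every j ∈ [n], every subset 𝒥 = {j_1,…,j_r} ⊆ [n] with j ∉ 𝒥, and every choice of permutation matrices Π_1,…,Π_r ∈ 𝒫_m not all equal to the identity, the m×(r+1) matrix [x_j Π_1 x_{j_1} ⋯ Π_r x_{j_r}] has rank r+1. -/

import Mathlib

/-- `P` is an `m × m` permutation matrix over `ℂ`. -/
def IsPermMatrixC {m : ℕ} (P : Matrix (Fin m) (Fin m) ℂ) : Prop :=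
  ∃ σ : Equiv.Perm (Fin m), P = σ.permMatrix ℂ

/-- The complex determinantal variety `M_ℂ = {X ∈ ℂ^{m×n} : rank X ≤ r}`. -/
def detVarC (m n r : ℕ) : Set (Matrix (Fin m) (Fin n) ℂ) :=
  {X | X.rank ≤ r}

/-- Evaluation of a polynomial in the matrix entries at a matrix. -/
noncomputable def polyEvalC {m n : ℕ} (p : MvPolynomial (Fin m × Fin n) ℂ)
    (X : Matrix (Fin m) (Fin n) ℂ) : ℂ :=
  MvPolynomial.eval (fun q => X q.1 q.2) p

/-- `U` is a nonempty Zariski-open (hence dense) subset of the complex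
determinantal variety. -/
def IsZariskiOpenDenseC (m n r : ℕ) (U : Set (Matrix (Fin m) (Fin n) ℂ)) : Prop :=
  ∃ (k : ℕ) (ps : Fin k → MvPolynomial (Fin m × Fin n) ℂ),
    (∃ (i : Fin k) (X : Matrix (Fin m) (Fin n) ℂ),
        X ∈ detVarC m n r ∧ polyEvalC (ps i) X ≠ 0) ∧
    U = {X ∈ detVarC m n r | ∃ i : Fin k, polyEvalC (ps i) X ≠ 0}

namespace Stmt6Aux

open Matrix MvPolynomial

variable {m n r : ℕ}

lemma permMatrix_mulVec (σ : Equiv.Perm (Fin m)) (v : Fin m → ℂ) (i : Fin m) :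
    (σ.permMatrix ℂ).mulVec v i = v (σ i) := by
  simp [Matrix.mulVec, dotProduct, PEquiv.toMatrix_apply, Equiv.toPEquiv_apply]

lemma permMatrix_one : ((1 : Equiv.Perm (Fin m)).permMatrix ℂ) = 1 := by
  show (Equiv.toPEquiv 1).toMatrix = 1
  rw [show (1 : Equiv.Perm (Fin m)) = Equiv.refl (Fin m) from rfl, Equiv.toPEquiv_refl,
    PEquiv.toMatrix_refl]

/-- The augmented matrix `[x_j, σ₁·x_{g 1}, …, σ_r·x_{g r}]`. -/
def augM (X : Matrix (Fin m) (Fin n) ℂ) (j : Fin n) (g : Fin r → Fin n)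
    (σ : Fin r → Equiv.Perm (Fin m)) : Matrix (Fin m) (Fin (r + 1)) ℂ :=
  Matrix.of fun i k =>
    Fin.cons (α := fun _ => ℂ) (X i j) (fun k' => X (σ k' i) (g k')) k

/-- Determinant of the `s`-row submatrix of the augmented matrix, as a polynomial
in the entries of `X`. -/
noncomputable def Dpoly (j : Fin n) (g : Fin r → Fin n) (σ : Fin r → Equiv.Perm (Fin m))
    (s : Fin (r + 1) → Fin m) : MvPolynomial (Fin m × Fin n) ℂ :=
  Matrix.det (Matrix.of fun i k : Fin (r + 1) =>
    Fin.cons (α := fun _ => MvPolynomial (Fin m × Fin n) ℂ) (MvPolynomial.X (s i, j))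
      (fun k' => MvPolynomial.X (σ k' (s i), g k')) k)

lemma polyEvalC_Dpoly (X : Matrix (Fin m) (Fin n) ℂ) (j : Fin n) (g : Fin r → Fin n)
    (σ : Fin r → Equiv.Perm (Fin m)) (s : Fin (r + 1) → Fin m) :
    polyEvalC (Dpoly j g σ s) X = ((augM X j g σ).submatrix s id).det := by
  unfold polyEvalC Dpoly augM
  rw [RingHom.map_det]
  congr 1
  ext i k
  refine Fin.cases ?_ (fun k' => ?_) k <;> simp

lemma exists_s (hm : r + 1 ≤ m) (τ : Equiv.Perm (Fin m)) (hτ : τ ≠ 1) (k0 : Fin r) :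
    ∃ s : Fin (r + 1) → Fin m, Function.Injective s ∧ s 0 = τ (s k0.succ) := by
  obtain ⟨a, ha⟩ : ∃ a, τ a ≠ a := by
    by_contra h
    push_neg at h
    exact hτ (Equiv.ext h)
  set e0 : Fin (r + 1) → Fin m := Fin.castLE hm with he0def
  have he0 : Function.Injective e0 := Fin.castLE_injective hm
  set e : Fin (r + 1) → Fin m := fun k => Equiv.swap (e0 k0.succ) a (e0 k) with hedef
  have he : Function.Injective e := (Equiv.injective _).comp he0
  have hek : e k0.succ = a := by simp [hedef]
  refine ⟨fun k => Equiv.swap (e 0) (τ a) (e k), (Equiv.injective _).comp he, ?_⟩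
  have h1 : Equiv.swap (e 0) (τ a) (e 0) = τ a := Equiv.swap_apply_left _ _
  have h2 : Equiv.swap (e 0) (τ a) (e k0.succ) = a := by
    rw [hek]
    refine Equiv.swap_apply_of_ne_of_ne ?_ (Ne.symm ha)
    rw [← hek]
    exact fun h => (Fin.succ_ne_zero k0) (he h)
  show (Equiv.swap (e 0) (τ a)) (e 0) = τ ((Equiv.swap (e 0) (τ a)) (e k0.succ))
  rw [h1, h2]

lemma rank_full_of_det_submatrix_ne_zero (M : Matrix (Fin m) (Fin (r + 1)) ℂ)
    (s : Fin (r + 1) → Fin m) (h : ((M.submatrix s id)).det ≠ 0) : M.rank = r + 1 := by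
  have h1 : (M.submatrix s id).rank = r + 1 := by
    rw [Matrix.rank_of_isUnit _ ((Matrix.isUnit_iff_isUnit_det _).2 (isUnit_iff_ne_zero.2 h))]
    simp
  have h2 : M.submatrix s id = (Matrix.of fun i i' => if i' = s i then (1 : ℂ) else 0) * M := by
    ext i k
    simp [Matrix.mul_apply]
  have h3 : (M.submatrix s id).rank ≤ M.rank := by
    rw [h2]; exact Matrix.rank_mul_le_right _ _
  have h4 : M.rank ≤ r + 1 := Matrix.rank_le_width M
  omega

/-- The witness matrix for a configuration. -/
noncomputable def witX (j : Fin n) (g : Fin r → Fin n) (k0 : Fin r) (t : Fin r → Fin m) :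
    Matrix (Fin m) (Fin n) ℂ :=
  Matrix.of fun i c' => ∑ k : Fin r, (if i = t k then (1 : ℂ) else 0) *
    (if c' = j then (if k = k0 then (1 : ℂ) else 0) else if g k = c' then 1 else 0)

lemma key (j : Fin n) (g : Fin r → Fin n) (σ : Fin r → Equiv.Perm (Fin m))
    (hg : Function.Injective g) (hgj : ∀ k, g k ≠ j)
    (s : Fin (r + 1) → Fin m) (hsInj : Function.Injective s) (k0 : Fin r)
    (h0 : s 0 = σ k0 (s k0.succ)) :
    (augM (witX j g k0 (fun k => σ k (s k.succ))) j g σ).submatrix s id = 1 := by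
  ext i k
  set t : Fin r → Fin m := fun k => σ k (s k.succ) with ht
  refine Fin.cases ?_ (fun k' => ?_) k
  · show (witX j g k0 t) (s i) j = (1 : Matrix (Fin (r + 1)) (Fin (r + 1)) ℂ) i 0
    rw [Matrix.one_apply]
    simp only [witX, Matrix.of_apply, eq_self_iff_true, if_true, mul_ite, mul_one, mul_zero]
    rw [Finset.sum_ite_eq' Finset.univ k0 (fun k => if s i = t k then (1 : ℂ) else 0)]
    simp only [Finset.mem_univ, if_true]
    have : s i = t k0 ↔ i = 0 := by
      rw [show t k0 = s 0 from h0.symm]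
      exact ⟨fun h => hsInj h, fun h => by rw [h]⟩
    rw [if_congr this rfl rfl]
  · show (witX j g k0 t) (σ k' (s i)) (g k') = (1 : Matrix (Fin (r + 1)) (Fin (r + 1)) ℂ) i k'.succ
    rw [Matrix.one_apply]
    simp only [witX, Matrix.of_apply, if_neg (hgj k')]
    have hterm : ∀ k : Fin r, (if σ k' (s i) = t k then (1 : ℂ) else 0) *
        (if g k = g k' then 1 else 0) =
        if k = k' then (if σ k' (s i) = t k then (1 : ℂ) else 0) else 0 := by
      intro k
      by_cases hk : k = k'
      · simp [hk]
      · rw [if_neg (fun h => hk (hg h)), if_neg hk, mul_zero]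
    rw [Finset.sum_congr rfl (fun k _ => hterm k),
      Finset.sum_ite_eq' Finset.univ k' (fun k => if σ k' (s i) = t k then (1 : ℂ) else 0)]
    simp only [Finset.mem_univ, if_true]
    have : σ k' (s i) = t k' ↔ i = k'.succ := by
      constructor
      · intro h; exact hsInj ((σ k').injective h)
      · intro h; rw [h]
    rw [if_congr this rfl rfl]

/-- Entries of the product `A * B` as polynomials in the entries of `A` and `B`. -/
noncomputable def fent (q : Fin m × Fin n) :
    MvPolynomial ((Fin m × Fin r) ⊕ (Fin r × Fin n)) ℂ :=
  ∑ k : Fin r, MvPolynomial.X (Sum.inl (q.1, k)) * MvPolynomial.X (Sum.inr (k, q.2))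

/-- Substitution `X q ↦ (A*B) q`. -/
noncomputable def phi : MvPolynomial (Fin m × Fin n) ℂ →+*
    MvPolynomial ((Fin m × Fin r) ⊕ (Fin r × Fin n)) ℂ :=
  MvPolynomial.eval₂Hom MvPolynomial.C fent

lemma eval_phi (v : (Fin m × Fin r) ⊕ (Fin r × Fin n) → ℂ)
    (p : MvPolynomial (Fin m × Fin n) ℂ) :
    MvPolynomial.eval v (phi p) =
      polyEvalC p (Matrix.of fun i c => MvPolynomial.eval v (fent (r := r) (i, c))) := by
  show MvPolynomial.eval v (eval₂ C fent p) = _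
  rw [eval_eval₂]
  have hC : (MvPolynomial.eval v).comp (C (σ := (Fin m × Fin r) ⊕ (Fin r × Fin n))) =
      RingHom.id ℂ := by
    ext a
    simp
  rw [hC, eval₂_id]
  rfl

lemma eval_fent (v : (Fin m × Fin r) ⊕ (Fin r × Fin n) → ℂ) (i : Fin m) (c : Fin n) :
    MvPolynomial.eval v (fent (r := r) (i, c)) =
      ∑ k : Fin r, v (Sum.inl (i, k)) * v (Sum.inr (k, c)) := by
  simp [fent]

lemma exists_eval_ne_zero {ι : Type*} (p : MvPolynomial ι ℂ) (hp : p ≠ 0) :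
    ∃ v : ι → ℂ, MvPolynomial.eval v p ≠ 0 := by
  by_contra h
  push_neg at h
  exact hp (MvPolynomial.funext fun x => by rw [h x, map_zero])

end Stmt6Aux

theorem stmt6 (m n r : ℕ) (hm : r + 1 ≤ m) (hn : r + 1 ≤ n) :
    ∃ U : Set (Matrix (Fin m) (Fin n) ℂ),
      IsZariskiOpenDenseC m n r U ∧
      ∀ X ∈ U,
        ∀ j : Fin n,
        ∀ g : Fin r → Fin n, Function.Injective g → (∀ k, g k ≠ j) →
        ∀ P : Fin r → Matrix (Fin m) (Fin m) ℂ, (∀ k, IsPermMatrixC (P k)) →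
          (¬ ∀ k, P k = 1) →
          (Matrix.of fun i (k : Fin (r + 1)) =>
            Fin.cons (X i j)
              (fun k' : Fin r => (P k').mulVec (fun i' => X i' (g k')) i) k).rank
            = r + 1 := by
  classical
  open Stmt6Aux MvPolynomial in
  -- valid configurations
  let Valid : (Fin n × (Fin r → Fin n) × (Fin r → Equiv.Perm (Fin m))) → Prop :=
    fun c => Function.Injective c.2.1 ∧ (∀ k, c.2.1 k ≠ c.1) ∧ ∃ k, c.2.2 k ≠ 1
  have hex : ∀ c : {c // Valid c}, ∃ s : Fin (r + 1) → Fin m,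
      Function.Injective s ∧ ∃ k0 : Fin r, s 0 = c.1.2.2 k0 (s k0.succ) := by
    rintro ⟨c, hg, hgj, k1, hk1⟩
    obtain ⟨s, hs, h0⟩ := Stmt6Aux.exists_s hm _ hk1 k1
    exact ⟨s, hs, k1, h0⟩
  choose sF hsF k0F h0F using hex
  let D : {c // Valid c} → MvPolynomial (Fin m × Fin n) ℂ :=
    fun c => Stmt6Aux.Dpoly c.1.1 c.1.2.1 c.1.2.2 (sF c)
  let p : MvPolynomial (Fin m × Fin n) ℂ := ∏ c, D c
  have hpprod : ∀ X, polyEvalC p X = ∏ c, polyEvalC (D c) X := by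
    intro X
    unfold polyEvalC
    exact map_prod _ _ _
  -- each φ(D c) is a nonzero polynomial in (A, B)
  have hphiD : ∀ c, Stmt6Aux.phi (r := r) (D c) ≠ 0 := by
    rintro ⟨⟨j, g, σ⟩, hg, hgj, hσ⟩ hc0
    set c : {c // Valid c} := ⟨(j, g, σ), hg, hgj, hσ⟩
    set t : Fin r → Fin m := fun k => σ k ((sF c) k.succ) with htdef
    set v : (Fin m × Fin r) ⊕ (Fin r × Fin n) → ℂ :=
      Sum.elim (fun ik => if ik.1 = t ik.2 then (1 : ℂ) else 0)
        (fun kc => if kc.2 = j then (if kc.1 = k0F c then (1 : ℂ) else 0)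
          else if g kc.1 = kc.2 then 1 else 0) with hvdef
    have h1 : MvPolynomial.eval v (Stmt6Aux.phi (r := r) (D c)) = 1 := by
      rw [Stmt6Aux.eval_phi]
      have hXw : (Matrix.of fun i c' => MvPolynomial.eval v (Stmt6Aux.fent (r := r) (i, c')))
          = Stmt6Aux.witX j g (k0F c) t := by
        ext i c'
        rw [Matrix.of_apply, Stmt6Aux.eval_fent]
        rfl
      rw [hXw]
      show polyEvalC (Stmt6Aux.Dpoly j g σ (sF c)) _ = 1
      rw [Stmt6Aux.polyEvalC_Dpoly, htdef,
        Stmt6Aux.key j g σ hg hgj (sF c) (hsF c) (k0F c) (h0F c), Matrix.det_one]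
    rw [hc0, map_zero] at h1
    exact zero_ne_one h1
  have hphip : Stmt6Aux.phi (r := r) p ≠ 0 := by
    show Stmt6Aux.phi (r := r) (∏ c, D c) ≠ 0
    rw [map_prod]
    exact Finset.prod_ne_zero_iff.2 fun c _ => hphiD c
  obtain ⟨v, hv⟩ := Stmt6Aux.exists_eval_ne_zero _ hphip
  -- the witness matrix
  let W : Matrix (Fin m) (Fin n) ℂ :=
    Matrix.of fun i c => MvPolynomial.eval v (Stmt6Aux.fent (r := r) (i, c))
  have hWp : polyEvalC p W ≠ 0 := by
    rw [← Stmt6Aux.eval_phi]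
    exact hv
  have hWrank : W ∈ detVarC m n r := by
    have hW : W = (Matrix.of fun (i : Fin m) (k : Fin r) => v (Sum.inl (i, k))) *
        (Matrix.of fun (k : Fin r) (c : Fin n) => v (Sum.inr (k, c))) := by
      ext i c
      rw [Matrix.mul_apply]
      show MvPolynomial.eval v (Stmt6Aux.fent (r := r) (i, c)) = _
      rw [Stmt6Aux.eval_fent]
      rfl
    show W.rank ≤ r
    rw [hW]
    calc ((Matrix.of fun (i : Fin m) (k : Fin r) => v (Sum.inl (i, k))) *
        (Matrix.of fun (k : Fin r) (c : Fin n) => v (Sum.inr (k, c)))).rank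
        ≤ (Matrix.of fun (i : Fin m) (k : Fin r) => v (Sum.inl (i, k))).rank :=
          Matrix.rank_mul_le_left _ _
      _ ≤ Fintype.card (Fin r) := Matrix.rank_le_card_width _
      _ = r := Fintype.card_fin r
  refine ⟨{X ∈ detVarC m n r | ∃ _i : Fin 1, polyEvalC p X ≠ 0},
    ⟨1, fun _ => p, ⟨0, W, hWrank, hWp⟩, rfl⟩, ?_⟩
  rintro X ⟨hXdet, _, hpX⟩ j g hg hgj P hP hPne
  set σ : Fin r → Equiv.Perm (Fin m) := fun k => (hP k).choose with hσdef
  have hPσ : ∀ k, P k = (σ k).permMatrix ℂ := fun k => (hP k).choose_spec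
  have hσne : ∃ k, σ k ≠ 1 := by
    obtain ⟨k1, hk1⟩ := not_forall.1 hPne
    exact ⟨k1, fun h => hk1 (by rw [hPσ k1, h, Stmt6Aux.permMatrix_one])⟩
  set c : {c // Valid c} := ⟨(j, g, σ), hg, hgj, hσne⟩
  have hDc : polyEvalC (D c) X ≠ 0 := by
    intro h0
    apply hpX
    rw [hpprod]
    exact Finset.prod_eq_zero (Finset.mem_univ c) h0
  have hDc' : ((Stmt6Aux.augM X j g σ).submatrix (sF c) id).det ≠ 0 := by
    rw [← Stmt6Aux.polyEvalC_Dpoly]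
    exact hDc
  have hM : (Matrix.of fun i (k : Fin (r + 1)) =>
      Fin.cons (X i j)
        (fun k' : Fin r => (P k').mulVec (fun i' => X i' (g k')) i) k)
      = Stmt6Aux.augM X j g σ := by
    ext i k
    refine Fin.cases rfl (fun k' => ?_) k
    show (P k').mulVec (fun i' => X i' (g k')) i = X (σ k' i) (g k')
    rw [hPσ k', Stmt6Aux.permMatrix_mulVec]
  rw [hM]
  exact Stmt6Aux.rank_full_of_det_submatrix_ne_zero _ _ hDc'
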